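/- Let A be a contractible Banach algebra with diagonal M = Σ aₙ⊗bₙ (with Σ‖aₙ‖‖bₙ‖ < ∞), and let E, F be unital Banach left A-modules. Then the map Φ: L(E,F) → L(E,F) defined by Φ(T)(x) = Σ aₙ T(bₙ x) is a well-defined bounded linear projection onto the subspace of left A-module morphisms from E to F. -/

import Mathlib

/-- A Banach `A`-bimodule structure on a normed space `E`. -/
structure BanachBimodule (A E : Type) [NonUnitalNormedRing A] [NormedSpace ℂ A]
    [NormedAddCommGroup E] [NormedSpace ℂ E] where
  l : A →L[ℂ] E →L[ℂ] E
  r : A →L[ℂ] E →L[ℂ] E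
  l_mul : ∀ a b x, l (a * b) x = l a (l b x)
  r_mul : ∀ a b x, r (a * b) x = r b (r a x)
  lr_comm : ∀ a b x, l a (r b x) = r b (l a x)

/-- A Banach algebra `A` is contractible if every bounded derivation from `A`
into any Banach `A`-bimodule is inner. -/
def Contractible (A : Type) [NonUnitalNormedRing A] [NormedSpace ℂ A] : Prop :=
  ∀ (E : Type) [NormedAddCommGroup E] [NormedSpace ℂ E] [CompleteSpace E],
    ∀ (B : BanachBimodule A E) (D : A →L[ℂ] E),
      (∀ a b, D (a * b) = B.l a (D b) + B.r b (D a)) →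
      ∃ v : E, ∀ a, D a = B.l a v - B.r a v

/-- The families `a b : ι → A` represent a diagonal `M = Σ aₙ ⊗ bₙ` of the
unital Banach algebra `A` in the completed projective tensor product `A ⊗^γ A`:
the representing series is absolutely convergent, `Δ(M) = 1`, and
`(c ⊗ 1) M = M (1 ⊗ c)` for all `c` (the latter equality in `A ⊗^γ A` being
tested against all bounded bilinear functionals, which separate the points
of `A ⊗^γ A`). -/
def IsDiagonal {A : Type} [NormedRing A] [NormedAlgebra ℂ A] {ι : Type}
    (a b : ι → A) : Prop :=
  Summable (fun n => ‖a n‖ * ‖b n‖) ∧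
  (∑' n, a n * b n) = 1 ∧
  ∀ (φ : A →L[ℂ] A →L[ℂ] ℂ) (c : A),
    (∑' n, φ (c * a n) (b n)) = ∑' n, φ (a n) (b n * c)

/-- A unital Banach left `A`-module structure on a normed space `E`. -/
structure UnitalLeftModule (A E : Type) [NormedRing A] [NormedAlgebra ℂ A]
    [NormedAddCommGroup E] [NormedSpace ℂ E] where
  l : A →L[ℂ] E →L[ℂ] E
  l_mul : ∀ a b x, l (a * b) x = l a (l b x)
  l_one : ∀ x, l 1 x = x

/-- given a contractible Banach algebra `A` with diagonal
`M = Σ aₙ ⊗ bₙ` and unital Banach left `A`-modules `E`, `F`, the map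
`Φ(T)(x) = Σ aₙ T(bₙ x)` is a well-defined bounded linear projection of
`L(E,F)` onto the subspace of left `A`-module morphisms. -/
theorem diagonal_projection_onto_module_morphisms
    (A : Type) [NormedRing A] [NormedAlgebra ℂ A] [CompleteSpace A]
    (hA : Contractible A) (a b : ℕ → A) (hdiag : IsDiagonal a b)
    (E F : Type) [NormedAddCommGroup E] [NormedSpace ℂ E] [CompleteSpace E]
    [NormedAddCommGroup F] [NormedSpace ℂ F] [CompleteSpace F]
    (LE : UnitalLeftModule A E) (LF : UnitalLeftModule A F) :
    ∃ Φ : (E →L[ℂ] F) →L[ℂ] (E →L[ℂ] F),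
      (∀ T x, Φ T x = ∑' n, LF.l (a n) (T (LE.l (b n) x))) ∧
      (∀ T, Φ (Φ T) = Φ T) ∧
      (∀ T c x, (Φ T) (LE.l c x) = LF.l c ((Φ T) x)) ∧
      (∀ T : E →L[ℂ] F, (∀ c x, T (LE.l c x) = LF.l c (T x)) → Φ T = T) := by
  obtain ⟨hsum, hone, hcomm⟩ := hdiag
  set c : ℕ → (E →L[ℂ] F) → (E →L[ℂ] F) := fun n T =>
    (LF.l (a n)).comp (T.comp (LE.l (b n))) with hc
  have hcnorm : ∀ n T, ‖c n T‖ ≤ (‖LF.l‖ * ‖LE.l‖ * ‖T‖) * (‖a n‖ * ‖b n‖) := by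
    intro n T
    calc ‖(LF.l (a n)).comp (T.comp (LE.l (b n)))‖
        ≤ ‖LF.l (a n)‖ * ‖T.comp (LE.l (b n))‖ := ContinuousLinearMap.opNorm_comp_le _ _
      _ ≤ ‖LF.l (a n)‖ * (‖T‖ * ‖LE.l (b n)‖) := by
          gcongr; exact ContinuousLinearMap.opNorm_comp_le _ _
      _ ≤ (‖LF.l‖ * ‖a n‖) * (‖T‖ * (‖LE.l‖ * ‖b n‖)) := by
          gcongr <;> exact ContinuousLinearMap.le_opNorm _ _
      _ = (‖LF.l‖ * ‖LE.l‖ * ‖T‖) * (‖a n‖ * ‖b n‖) := by ring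
  have hcs : ∀ T, Summable fun n => c n T := fun T =>
    Summable.of_norm_bounded (hsum.mul_left _) (hcnorm · T)
  set S : (E →L[ℂ] F) → (E →L[ℂ] F) := fun T => ∑' n, c n T with hS
  have hadd : ∀ T U, S (T + U) = S T + S U := by
    intro T U
    rw [hS]
    simp only
    rw [← Summable.tsum_add (hcs T) (hcs U)]
    refine tsum_congr fun n => ?_
    ext x
    simp [hc, ContinuousLinearMap.comp_apply, map_add]
  have hsmul : ∀ (r : ℂ) T, S (r • T) = r • S T := by
    intro r T
    rw [hS]
    simp only
    rw [← Summable.tsum_const_smul r (hcs T)]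
    refine tsum_congr fun n => ?_
    ext x
    simp [hc, ContinuousLinearMap.comp_apply, map_smul]
  have hbound : ∀ T, ‖S T‖ ≤ ((‖LF.l‖ * ‖LE.l‖) * ∑' n, ‖a n‖ * ‖b n‖) * ‖T‖ := by
    intro T
    have h1 : ‖S T‖ ≤ ∑' n, ‖c n T‖ := norm_tsum_le_tsum_norm <|
      Summable.of_nonneg_of_le (fun n => norm_nonneg _) (hcnorm · T) (hsum.mul_left _)
    have h2 : (∑' n, ‖c n T‖) ≤ ∑' n, (‖LF.l‖ * ‖LE.l‖ * ‖T‖) * (‖a n‖ * ‖b n‖) :=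
      Summable.tsum_le_tsum (hcnorm · T)
        (Summable.of_nonneg_of_le (fun n => norm_nonneg _) (hcnorm · T) (hsum.mul_left _))
        (hsum.mul_left _)
    rw [tsum_mul_left] at h2
    calc ‖S T‖ ≤ _ := h1
      _ ≤ _ := h2
      _ = ((‖LF.l‖ * ‖LE.l‖) * ∑' n, ‖a n‖ * ‖b n‖) * ‖T‖ := by ring
  set Φ : (E →L[ℂ] F) →L[ℂ] (E →L[ℂ] F) :=
    LinearMap.mkContinuous
      { toFun := S, map_add' := hadd, map_smul' := hsmul }
      ((‖LF.l‖ * ‖LE.l‖) * ∑' n, ‖a n‖ * ‖b n‖) hbound with hΦ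
  have hΦT : ∀ T, Φ T = ∑' n, c n T := fun T => rfl
  have happ : ∀ (T : E →L[ℂ] F) (x : E), Φ T x = ∑' n, LF.l (a n) (T (LE.l (b n) x)) := by
    intro T x
    rw [hΦT]
    exact (ContinuousLinearMap.apply ℂ F x).map_tsum (hcs T)
  have hcsx : ∀ (T : E →L[ℂ] F) (x : E), Summable fun n => LF.l (a n) (T (LE.l (b n) x)) := by
    intro T x
    have := (hcs T).map (ContinuousLinearMap.apply ℂ F x)
      (ContinuousLinearMap.apply ℂ F x).continuous
    simpa [Function.comp_def, hc] using this
  have hmorph : ∀ (T : E →L[ℂ] F) (d : A) (x : E), Φ T (LE.l d x) = LF.l d (Φ T x) := by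
    intro T d x
    rw [NormedSpace.eq_iff_forall_dual_eq ℂ]
    intro f
    set g : A →L[ℂ] F := T.comp ((ContinuousLinearMap.apply ℂ E x).comp LE.l) with hg
    set h : A →L[ℂ] (F →L[ℂ] ℂ) :=
      ((ContinuousLinearMap.compL ℂ F F ℂ) f).comp LF.l with hh
    set φ : A →L[ℂ] A →L[ℂ] ℂ :=
      (((ContinuousLinearMap.compL ℂ A F ℂ).flip g).comp h) with hφ
    have hφapp : ∀ u v, φ u v = f (LF.l u (T (LE.l v x))) := fun u v => rfl
    have key := hcomm φ d
    have hL : f (Φ T (LE.l d x)) = ∑' n, φ (a n) (b n * d) := by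
      rw [happ, f.map_tsum (hcsx T (LE.l d x))]
      refine tsum_congr fun n => ?_
      rw [hφapp, LE.l_mul]
    have hR : f (LF.l d (Φ T x)) = ∑' n, φ (d * a n) (b n) := by
      rw [happ, ← ContinuousLinearMap.comp_apply f (LF.l d), (f.comp (LF.l d)).map_tsum (hcsx T x)]
      refine tsum_congr fun n => ?_
      show f (LF.l d (LF.l (a n) (T (LE.l (b n) x)))) = _
      rw [hφapp, LF.l_mul]
    rw [hL, hR, key]
  have hfix : ∀ T : E →L[ℂ] F, (∀ d x, T (LE.l d x) = LF.l d (T x)) → Φ T = T := by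
    intro T hT
    ext x
    rw [happ]
    have h1 : ∀ n, LF.l (a n) (T (LE.l (b n) x)) = LF.l (a n * b n) (T x) := by
      intro n; rw [hT, LF.l_mul]
    rw [tsum_congr h1]
    have hab : Summable fun n => a n * b n :=
      Summable.of_norm_bounded hsum fun n => norm_mul_le _ _
    have h2 := (((ContinuousLinearMap.apply ℂ F (T x)).comp LF.l)).map_tsum hab
    simp only [ContinuousLinearMap.comp_apply, ContinuousLinearMap.apply_apply] at h2
    rw [← h2, hone, LF.l_one]
  exact ⟨Φ, happ, fun T => hfix (Φ T) (hmorph T), hmorph, hfix⟩
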